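/- The key Chu–Vandermonde computation in the symmetry of the transported root-plugging: for k, k̄ ∈ ℕ^{d+1} and fixed tuples r ∈ (ℕ^{d+1})^n, r̄ ∈ (ℕ^{d+1})^{n̄}, Σ_{ℓ ≤ r componentwise, ℓ̄ ≤ r̄} C(k, ℓ)·C(k̄, ℓ̄)·C(k − |ℓ|; (r̄ᵢ − ℓ̄ᵢ)ᵢ)·C(k̄ − |ℓ̄|; (rᵢ − ℓᵢ)ᵢ) = C(k + k̄; r̄, r), where C(m; (sᵢ)) denotes the multinomial coefficient m!/((m − Σsᵢ)! ∏ sᵢ!) and all coefficients vanish when subtraction in ℕ^{d+1} is undefined. -/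

import Mathlib

/-- Multi-indices in `ℕ^{d+1}`. -/
abbrev Nd (d : ℕ) : Type := Fin (d + 1) → ℕ

/-- Componentwise binomial coefficient on `ℕ^{d+1}` (zero if some component exceeds). -/
def binom {d : ℕ} (n ℓ : Nd d) : ℕ := ∏ c, Nat.choose (n c) (ℓ c)

/-- Componentwise multinomial coefficient `C(m; s₁, …, s_n)` of a tuple of
multi-indices, as the iterated product of binomial coefficients
`∏ᵢ C(m − s₁ − ⋯ − s_{i−1}, sᵢ)`; it vanishes as soon as the subtractions leave
`ℕ^{d+1}` (this encodes the convention that coefficients vanish when subtraction in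
`ℕ^{d+1}` is undefined). -/
def ndMnom {d : ℕ} (m : Nd d) {n : ℕ} (L : Fin n → Nd d) : ℕ :=
  ∏ i : Fin n, binom (m - ∑ j ∈ Finset.univ.filter (· < i), L j) (L i)

open Finset

namespace TPCV
variable {d : ℕ}

lemma nat_choose_swap (m a b : ℕ) :
    m.choose a * (m - a).choose b = m.choose b * (m - b).choose a := by
  rcases le_or_gt (a + b) m with h | h
  · have e1 := Nat.choose_mul (n := m) (Nat.le_add_right a b)
    have e2 := Nat.choose_mul (n := m) (Nat.le_add_left b a)
    simp only [Nat.add_sub_cancel_left, Nat.add_sub_cancel] at e1 e2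
    have hs : (a + b).choose a = (a + b).choose b := by
      rw [← Nat.choose_symm (Nat.le_add_left b a)]; congr 1; omega
    rw [← e1, ← e2, hs]
  · rcases le_or_gt a m with ha | ha
    · rcases le_or_gt b m with hb | hb
      · rw [Nat.choose_eq_zero_of_lt (by omega : m - a < b),
          Nat.choose_eq_zero_of_lt (by omega : m - b < a), Nat.mul_zero, Nat.mul_zero]
      · rw [Nat.choose_eq_zero_of_lt hb, Nat.choose_eq_zero_of_lt (by omega : m - a < b),
          Nat.mul_zero, Nat.zero_mul]
    · rw [Nat.choose_eq_zero_of_lt ha, Nat.zero_mul]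
      rcases le_or_gt b m with hb | hb
      · rw [Nat.choose_eq_zero_of_lt (by omega : m - b < a), Nat.mul_zero]
      · rw [Nat.choose_eq_zero_of_lt hb, Nat.zero_mul]

lemma binom_swap (m a b : Nd d) :
    binom m a * binom (m - a) b = binom m b * binom (m - b) a := by
  unfold binom
  rw [← Finset.prod_mul_distrib, ← Finset.prod_mul_distrib]
  exact Finset.prod_congr rfl fun c _ => by
    simpa [Pi.sub_apply] using nat_choose_swap (m c) (a c) (b c)

lemma le_of_binom_ne_zero {m a : Nd d} (h : binom m a ≠ 0) : a ≤ m := by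
  intro c
  rw [binom, Finset.prod_ne_zero_iff] at h
  have := h c (Finset.mem_univ c)
  by_contra hc
  exact this (Nat.choose_eq_zero_of_lt (Nat.lt_of_not_le hc))

lemma nd_sub_zero (m : Nd d) : m - 0 = m := funext fun c => Nat.sub_zero _
lemma nd_sub_sub (m a b : Nd d) : m - a - b = m - (a + b) :=
  funext fun c => (Nat.sub_sub _ _ _)
lemma nd_sub_sub_cancel {a b : Nd d} (h : b ≤ a) : a - (a - b) = b :=
  funext fun c => Nat.sub_sub_self (h c)
lemma nd_add_sub_cancel' {t s : Nd d} (h : t ≤ s) : t + (s - t) = s :=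
  funext fun c => Nat.add_sub_cancel' (h c)

lemma ndMnom_nil (m : Nd d) (L : Fin 0 → Nd d) : ndMnom m L = 1 := by simp [ndMnom]

lemma ndMnom_cons (m a : Nd d) {n : ℕ} (L : Fin n → Nd d) :
    ndMnom m (Fin.cons a L) = binom m a * ndMnom (m - a) L := by
  unfold ndMnom
  rw [Fin.prod_univ_succ]
  congr 1
  · simp
  · refine Finset.prod_congr rfl fun i _ => ?_
    have hsum : (∑ j ∈ Finset.univ.filter (· < i.succ), Fin.cons a L j)
        = a + ∑ j ∈ Finset.univ.filter (· < i), L j := by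
      rw [Finset.sum_filter, Finset.sum_filter, Fin.sum_univ_succ]
      simp [Fin.succ_pos, Fin.succ_lt_succ_iff]
    rw [hsum, Fin.cons_succ, ← nd_sub_sub]

end TPCV

namespace TPCV
variable {d : ℕ}

lemma ndMnom_snoc (m : Nd d) {n : ℕ} (L : Fin n → Nd d) (a : Nd d) :
    ndMnom m (Fin.snoc L a) = ndMnom m L * binom (m - ∑ i, L i) a := by
  unfold ndMnom
  rw [Fin.prod_univ_castSucc]
  congr 1
  · refine Finset.prod_congr rfl fun i _ => ?_
    have hsum : (∑ j ∈ Finset.univ.filter (· < i.castSucc), Fin.snoc L a j)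
        = ∑ j ∈ Finset.univ.filter (· < i), L j := by
      rw [Finset.sum_filter, Finset.sum_filter, Fin.sum_univ_castSucc]
      simp [Fin.castSucc_lt_castSucc_iff, (Fin.castSucc_lt_last i).not_gt]
    rw [hsum, Fin.snoc_castSucc]
  · have hsum : (∑ j ∈ Finset.univ.filter (· < Fin.last n), Fin.snoc L a j)
        = ∑ i, L i := by
      rw [Finset.sum_filter, Fin.sum_univ_castSucc]
      simp [Fin.castSucc_lt_last]
    rw [hsum, Fin.snoc_last]

lemma ndMnom_append (m : Nd d) {p : ℕ} (A : Fin p → Nd d) :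
    ∀ {q : ℕ} (B : Fin q → Nd d),
      ndMnom m (Fin.append A B) = ndMnom m A * ndMnom (m - ∑ i, A i) B := by
  intro q
  induction q with
  | zero =>
    intro B
    have hAB : Fin.append A B = A := by
      funext i
      have h : (i : ℕ) < p := i.isLt
      have := Fin.append_left A B ⟨i, h⟩
      simpa using this
    rw [hAB, ndMnom_nil, Nat.mul_one]
  | succ q ih =>
    intro B
    rw [← Fin.snoc_init_self B, Fin.append_snoc, ndMnom_snoc, ih, ndMnom_snoc]
    have hsum : (∑ i, Fin.append A (Fin.init B) i) = (∑ i, A i) + ∑ i, Fin.init B i := by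
      rw [Fin.sum_univ_add]
      simp [Fin.append_left, Fin.append_right]
    rw [Nat.mul_assoc]
    congr 2
    rw [nd_sub_sub]
    exact congrArg (fun z => binom (m - z) (B (Fin.last q))) hsum

lemma binom_ndMnom_swap (a : Nd d) :
    ∀ {q : ℕ} (m : Nd d) (B : Fin q → Nd d),
      binom m a * ndMnom (m - a) B = ndMnom m B * binom (m - ∑ i, B i) a := by
  intro q
  induction q with
  | zero =>
    intro m B
    simp [ndMnom_nil, nd_sub_zero, Nat.mul_comm]
  | succ q ih =>
    intro m B
    rw [← Fin.cons_self_tail B, ndMnom_cons, ndMnom_cons]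
    have hsum : (∑ i, Fin.cons (B 0) (Fin.tail B) i) = B 0 + ∑ i, Fin.tail B i := by
      rw [Fin.sum_univ_succ]; simp
    rw [hsum]
    calc binom m a * (binom (m - a) (B 0) * ndMnom (m - a - B 0) (Fin.tail B))
        = (binom m a * binom (m - a) (B 0)) * ndMnom (m - a - B 0) (Fin.tail B) := by ring
      _ = (binom m (B 0) * binom (m - B 0) a) * ndMnom (m - B 0 - a) (Fin.tail B) := by
          rw [binom_swap, nd_sub_sub, nd_sub_sub, add_comm a (B 0)]
      _ = binom m (B 0) * (binom (m - B 0) a * ndMnom (m - B 0 - a) (Fin.tail B)) := by ring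
      _ = binom m (B 0) * (ndMnom (m - B 0) (Fin.tail B)
            * binom (m - B 0 - ∑ i, Fin.tail B i) a) := by rw [ih]
      _ = binom m (B 0) * ndMnom (m - B 0) (Fin.tail B)
            * binom (m - (B 0 + ∑ i, Fin.tail B i)) a := by rw [nd_sub_sub]; ring

lemma ndMnom_mul_swap :
    ∀ {p : ℕ} (m : Nd d) (A : Fin p → Nd d) {q : ℕ} (B : Fin q → Nd d),
      ndMnom m A * ndMnom (m - ∑ i, A i) B = ndMnom m B * ndMnom (m - ∑ i, B i) A := by
  intro p
  induction p with
  | zero =>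
    intro m A q B
    have h0 : (∑ i, A i) = 0 := by simp
    simp [ndMnom_nil, h0, nd_sub_zero]
  | succ p ih =>
    intro m A q B
    rw [← Fin.cons_self_tail A, ndMnom_cons, ndMnom_cons]
    have hsum : (∑ i, Fin.cons (A 0) (Fin.tail A) i) = A 0 + ∑ i, Fin.tail A i := by
      rw [Fin.sum_univ_succ]; simp
    rw [hsum]
    calc binom m (A 0) * ndMnom (m - A 0) (Fin.tail A)
          * ndMnom (m - (A 0 + ∑ i, Fin.tail A i)) B
        = binom m (A 0) * (ndMnom (m - A 0) (Fin.tail A)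
            * ndMnom (m - A 0 - ∑ i, Fin.tail A i) B) := by rw [← nd_sub_sub]; ring
      _ = binom m (A 0) * (ndMnom (m - A 0) B
            * ndMnom (m - A 0 - ∑ i, B i) (Fin.tail A)) := by rw [ih]
      _ = (binom m (A 0) * ndMnom (m - A 0) B)
            * ndMnom (m - A 0 - ∑ i, B i) (Fin.tail A) := by ring
      _ = (ndMnom m B * binom (m - ∑ i, B i) (A 0))
            * ndMnom (m - ∑ i, B i - A 0) (Fin.tail A) := by
          rw [binom_ndMnom_swap, nd_sub_sub, nd_sub_sub, add_comm (A 0) (∑ i, B i)]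
      _ = ndMnom m B * (binom (m - ∑ i, B i) (A 0)
            * ndMnom (m - ∑ i, B i - A 0) (Fin.tail A)) := by ring

lemma ndMnom_append_swap (m : Nd d) {p q : ℕ} (A : Fin p → Nd d) (B : Fin q → Nd d) :
    ndMnom m (Fin.append A B) = ndMnom m (Fin.append B A) := by
  rw [ndMnom_append, ndMnom_append, ndMnom_mul_swap]

end TPCV

namespace TPCV
variable {d : ℕ}

lemma sum_Iic_cons {M : Type*} [AddCommMonoid M] {n : ℕ} (S : Fin (n + 1) → Nd d)
    (f : (Fin (n + 1) → Nd d) → M) :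
    ∑ T ∈ Finset.Iic S, f T
      = ∑ t ∈ Finset.Iic (S 0), ∑ T' ∈ Finset.Iic (Fin.tail S), f (Fin.cons t T') := by
  rw [← Finset.sum_product']
  refine Finset.sum_nbij' (i := fun T => (T 0, Fin.tail T))
    (j := fun p => Fin.cons p.1 p.2) ?_ ?_ ?_ ?_ ?_
  · intro T hT
    rw [Finset.mem_Iic] at hT
    rw [Finset.mem_product, Finset.mem_Iic, Finset.mem_Iic]
    exact ⟨hT 0, fun i => hT i.succ⟩
  · intro p hp
    rw [Finset.mem_product, Finset.mem_Iic, Finset.mem_Iic] at hp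
    rw [Finset.mem_Iic]
    intro i
    refine Fin.cases ?_ ?_ i
    · simpa using hp.1
    · intro j; simpa [Fin.tail] using hp.2 j
  · intro T _
    exact Fin.cons_self_tail T
  · intro p _
    simp [Fin.tail_cons]
  · intro T _
    rw [Fin.cons_self_tail T]

lemma append_apply_left {α : Sort*} {p q : ℕ} (u : Fin p → α) (v : Fin q → α)
    (i : Fin (p + q)) (h : (i : ℕ) < p) : Fin.append u v i = u ⟨i, h⟩ := by
  have hi : i = Fin.castAdd q ⟨i, h⟩ := Fin.ext rfl
  conv_lhs => rw [hi]
  exact Fin.append_left u v _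

lemma append_apply_right {α : Sort*} {p q : ℕ} (u : Fin p → α) (v : Fin q → α)
    (i : Fin (p + q)) (h : p ≤ (i : ℕ)) (h2 : (i : ℕ) - p < q) :
    Fin.append u v i = v ⟨(i : ℕ) - p, h2⟩ := by
  have hi : i = Fin.natAdd p ⟨(i : ℕ) - p, h2⟩ := Fin.ext (by simp; omega)
  conv_lhs => rw [hi]
  exact Fin.append_right u v _

lemma sum_Iic_append {M : Type*} [AddCommMonoid M] {p q : ℕ}
    (U : Fin p → Nd d) (V : Fin q → Nd d) (f : (Fin (p + q) → Nd d) → M) :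
    ∑ T ∈ Finset.Iic (Fin.append U V), f T
      = ∑ u ∈ Finset.Iic U, ∑ v ∈ Finset.Iic V, f (Fin.append u v) := by
  rw [← Finset.sum_product']
  have key : ∀ T : Fin (p + q) → Nd d,
      Fin.append (fun i => T (Fin.castAdd q i)) (fun i => T (Fin.natAdd p i)) = T := by
    intro T
    funext i
    rcases lt_or_ge (i : ℕ) p with h | h
    · rw [append_apply_left _ _ i h]
      exact congrArg T (Fin.ext rfl : Fin.castAdd q ⟨i, h⟩ = i)
    · have h2 : (i : ℕ) - p < q := by omega
      rw [append_apply_right _ _ i h h2]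
      exact congrArg T (Fin.ext (by simp; omega) : Fin.natAdd p ⟨(i : ℕ) - p, h2⟩ = i)
  refine Finset.sum_nbij' (i := fun T => (fun i => T (Fin.castAdd q i), fun i => T (Fin.natAdd p i)))
    (j := fun uv => Fin.append uv.1 uv.2) ?_ ?_ ?_ ?_ ?_
  · intro T hT
    rw [Finset.mem_Iic] at hT
    rw [Finset.mem_product, Finset.mem_Iic, Finset.mem_Iic]
    constructor
    · intro i; simpa [Fin.append_left] using hT (Fin.castAdd q i)
    · intro i; simpa [Fin.append_right] using hT (Fin.natAdd p i)
  · intro uv huv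
    rw [Finset.mem_product, Finset.mem_Iic, Finset.mem_Iic] at huv
    rw [Finset.mem_Iic]
    intro i
    show Fin.append uv.1 uv.2 i ≤ Fin.append U V i
    rcases lt_or_ge (i : ℕ) p with h | h
    · rw [append_apply_left _ _ i h, append_apply_left _ _ i h]; exact huv.1 _
    · have h2 : (i : ℕ) - p < q := by omega
      rw [append_apply_right _ _ i h h2, append_apply_right _ _ i h h2]; exact huv.2 _
  · intro T _
    exact key T
  · intro uv _
    ext i
    · simp [Fin.append_left]
    · simp [Fin.append_right]
  · intro T _
    exact congrArg f (key T).symm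

lemma binom_vandermonde (k kb s : Nd d) :
    ∑ t ∈ Finset.Iic s, binom k t * binom kb (s - t) = binom (k + kb) s := by
  have hIic : (Finset.Iic s) = Fintype.piFinset (fun c => Finset.Iic (s c)) := by
    ext t; simp [Fintype.mem_piFinset, Pi.le_def]
  have hscalar : ∀ a b sc : ℕ,
      (∑ x ∈ Finset.Iic sc, a.choose x * b.choose (sc - x)) = (a + b).choose sc := by
    intro a b sc
    rw [Nat.add_choose_eq, Finset.Nat.sum_antidiagonal_eq_sum_range_succ_mk]
    congr 1
    ext x; simp [Nat.lt_succ_iff]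
  calc ∑ t ∈ Finset.Iic s, binom k t * binom kb (s - t)
      = ∑ t ∈ Fintype.piFinset (fun c => Finset.Iic (s c)),
          ∏ c, (k c).choose (t c) * (kb c).choose (s c - t c) := by
        rw [hIic]
        refine Finset.sum_congr rfl fun t _ => ?_
        rw [binom, binom, ← Finset.prod_mul_distrib]
        exact Finset.prod_congr rfl fun c _ => by simp [Pi.sub_apply]
    _ = ∏ c, ∑ x ∈ Finset.Iic (s c), (k c).choose x * (kb c).choose (s c - x) := by
        rw [Finset.prod_univ_sum]
    _ = ∏ c, (k c + kb c).choose (s c) := by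
        exact Finset.prod_congr rfl fun c _ => hscalar _ _ _
    _ = binom (k + kb) s := by
        rw [binom]; exact Finset.prod_congr rfl fun c _ => by simp [Pi.add_apply]

end TPCV

namespace TPCV
variable {d : ℕ}

lemma sum_Iic_sub {M : Type*} [AddCommMonoid M] {p : ℕ} (R : Fin p → Nd d)
    (f : (Fin p → Nd d) → M) :
    ∑ u ∈ Finset.Iic R, f u = ∑ ℓ ∈ Finset.Iic R, f (fun i => R i - ℓ i) := by
  refine Finset.sum_nbij' (i := fun u => fun i => R i - u i)
    (j := fun u => fun i => R i - u i) ?_ ?_ ?_ ?_ ?_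
  · intro u hu
    rw [Finset.mem_Iic]
    intro i c
    exact Nat.sub_le _ _
  · intro u hu
    rw [Finset.mem_Iic]
    intro i c
    exact Nat.sub_le _ _
  · intro u hu
    rw [Finset.mem_Iic] at hu
    funext i
    exact nd_sub_sub_cancel (hu i)
  · intro u hu
    rw [Finset.mem_Iic] at hu
    funext i
    exact nd_sub_sub_cancel (hu i)
  · intro u hu
    rw [Finset.mem_Iic] at hu
    exact congrArg f (funext fun i => (nd_sub_sub_cancel (hu i)).symm)

lemma ndMnom_vandermonde : ∀ {n : ℕ} (k kb : Nd d) (S : Fin n → Nd d),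
    (∑ T ∈ Finset.Iic S, ndMnom k T * ndMnom kb (fun i => S i - T i))
      = ndMnom (k + kb) S := by
  intro n
  induction n with
  | zero =>
    intro k kb S
    have hsingle : Finset.Iic S = {S} := Finset.ext fun T => by
      simp [Finset.mem_Iic, Subsingleton.elim T S]
    rw [hsingle, Finset.sum_singleton, ndMnom_nil, ndMnom_nil, ndMnom_nil]
  | succ n ih =>
    intro k kb S
    rw [sum_Iic_cons S (fun T => ndMnom k T * ndMnom kb (fun i => S i - T i))]
    have hcons : ∀ (t : Nd d) (T' : Fin n → Nd d),
        (fun i => S i - Fin.cons (α := fun _ => Nd d) t T' i)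
          = Fin.cons (S 0 - t) (fun i => Fin.tail S i - T' i) := by
      intro t T'
      funext i
      cases i using Fin.cases with
      | zero => simp
      | succ j => simp [Fin.tail]
    have step1 : ∀ t ∈ Finset.Iic (S 0),
        (∑ T' ∈ Finset.Iic (Fin.tail S),
            ndMnom k (Fin.cons t T') * ndMnom kb (fun i => S i - Fin.cons (α := fun _ => Nd d) t T' i))
          = binom k t * binom kb (S 0 - t) * ndMnom (k + kb - S 0) (Fin.tail S) := by
      intro t ht
      rw [Finset.mem_Iic] at ht
      have e : ∀ T' ∈ Finset.Iic (Fin.tail S),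
          ndMnom k (Fin.cons t T') * ndMnom kb (fun i => S i - Fin.cons (α := fun _ => Nd d) t T' i)
            = binom k t * binom kb (S 0 - t)
              * (ndMnom (k - t) T' * ndMnom (kb - (S 0 - t)) (fun i => Fin.tail S i - T' i)) := by
        intro T' _
        rw [hcons t T', ndMnom_cons, ndMnom_cons]
        ring
      refine Eq.trans (Finset.sum_congr rfl e) ?_
      rw [← Finset.mul_sum]
      by_cases h1 : binom k t = 0
      · simp [h1]
      by_cases h2 : binom kb (S 0 - t) = 0
      · simp [h2]
      have hk := le_of_binom_ne_zero h1
      have hkb := le_of_binom_ne_zero h2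
      have harg : (k - t) + (kb - (S 0 - t)) = k + kb - S 0 := by
        funext c
        have h3 := hk c
        have h4 := hkb c
        have h5 := ht c
        simp only [Pi.add_apply, Pi.sub_apply] at h3 h4 h5 ⊢
        omega
      rw [ih (k - t) (kb - (S 0 - t)) (Fin.tail S), harg]
    refine Eq.trans (Finset.sum_congr rfl step1) ?_
    rw [← Finset.sum_mul, binom_vandermonde]
    conv_rhs => rw [← Fin.cons_self_tail S]
    rw [ndMnom_cons]

end TPCV


open TPCV in
/-- **The key Chu–Vandermonde computation in the symmetry of the transported
root-plugging:** for `k, k̄ ∈ ℕ^{d+1}` and fixed tuples `r ∈ (ℕ^{d+1})^n`,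
`r̄ ∈ (ℕ^{d+1})^{n̄}`,
`Σ_{ℓ ≤ r, ℓ̄ ≤ r̄} C(k,ℓ)·C(k̄,ℓ̄)·C(k−|ℓ|; (r̄ᵢ−ℓ̄ᵢ)ᵢ)·C(k̄−|ℓ̄|; (rᵢ−ℓᵢ)ᵢ)
  = C(k+k̄; r̄, r)`,
where the sums are over tuples with `ℓᵢ ≤ rᵢ`, `ℓ̄ᵢ ≤ r̄ᵢ` componentwise. -/
theorem transported_plugging_chu_vandermonde (d n nb : ℕ) (k kb : Nd d)
    (r : Fin n → Nd d) (rb : Fin nb → Nd d) :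
    (∑ ℓ ∈ Finset.Iic r, ∑ ℓb ∈ Finset.Iic rb,
        ndMnom k ℓ * ndMnom kb ℓb
          * ndMnom (k - ∑ i, ℓ i) (fun i => rb i - ℓb i)
          * ndMnom (kb - ∑ i, ℓb i) (fun i => r i - ℓ i))
      = ndMnom (k + kb) (Fin.append rb r) := by
  conv_rhs => rw [← ndMnom_vandermonde k kb (Fin.append rb r)]
  rw [sum_Iic_append rb r
    (fun T => ndMnom k T * ndMnom kb (fun i => Fin.append rb r i - T i))]
  rw [Finset.sum_comm]
  conv_rhs => rw [sum_Iic_sub rb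
    (fun u => ∑ v ∈ Finset.Iic r, ndMnom k (Fin.append u v)
      * ndMnom kb (fun i : Fin (nb + n) => Fin.append rb r i - Fin.append u v i))]
  refine Finset.sum_congr rfl fun ℓb hℓb => ?_
  rw [Finset.mem_Iic] at hℓb
  refine Finset.sum_congr rfl fun ℓ hℓ => ?_
  rw [Finset.mem_Iic] at hℓ
  have h2 : (fun i => Fin.append rb r i
        - Fin.append (fun j => rb j - ℓb j) ℓ i)
      = Fin.append ℓb (fun i => r i - ℓ i) := by
    funext i
    rcases lt_or_ge (i : ℕ) nb with h | h
    · rw [append_apply_left rb r i h, append_apply_left (fun j => rb j - ℓb j) ℓ i h,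
        append_apply_left ℓb (fun i => r i - ℓ i) i h]
      exact nd_sub_sub_cancel (hℓb _)
    · have hq : (i : ℕ) - nb < n := by omega
      rw [append_apply_right rb r i h hq, append_apply_right (fun j => rb j - ℓb j) ℓ i h hq,
        append_apply_right ℓb (fun i => r i - ℓ i) i h hq]
  rw [h2]
  rw [ndMnom_append_swap k (fun j => rb j - ℓb j) ℓ, ndMnom_append, ndMnom_append]
  ring
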